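/- arXiv:1910.07887 — 2 statements merged into one kernel-verified Lean document; each statement's English description precedes it below -/
import Mathlib

section
/- Let 0 ≤ γ < α < 1 and let y : (0,1] → ℝ be continuous with t ↦ t^γ y(t) extending continuously to [0,1]. Then the Riemann–Liouville fractional integral I_{0+}^α y(t) tends to 0 as t → 0^+. -/
open Real Set Filter

lemma aux_integrable {p q b : ℝ} (hp : -1 < p) (hq : -1 < q) (hb : 0 < b) :
    IntervalIntegrable (fun s : ℝ => (b - s) ^ p * s ^ q) MeasureTheory.volume 0 b := by
  have h1 : IntervalIntegrable (fun s : ℝ => s ^ q) MeasureTheory.volume 0 (b / 2) :=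
    intervalIntegral.intervalIntegrable_rpow' hq
  have h2 : IntervalIntegrable (fun s : ℝ => (b - s) ^ p) MeasureTheory.volume (b / 2) b := by
    have := (intervalIntegral.intervalIntegrable_rpow' (a := b / 2) (b := 0) hp).comp_sub_left b
    simpa [show b - b / 2 = b / 2 by ring] using this
  have A : IntervalIntegrable (fun s : ℝ => (b - s) ^ p * s ^ q) MeasureTheory.volume 0 (b / 2) := by
    apply h1.continuousOn_mul
    apply ContinuousOn.rpow_const (continuous_const.sub continuous_id).continuousOn
    intro x hx
    left
    rw [uIcc_of_le (by linarith)] at hx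
    simp only [Pi.sub_apply, id_eq]
    have hx2 : x ≤ b / 2 := hx.2
    intro h
    have : x = b := by linarith [sub_eq_zero.mp h]
    linarith
  have B : IntervalIntegrable (fun s : ℝ => (b - s) ^ p * s ^ q) MeasureTheory.volume (b / 2) b := by
    apply h2.mul_continuousOn
    apply ContinuousOn.rpow_const continuousOn_id
    intro x hx
    left
    rw [uIcc_of_le (by linarith)] at hx
    simp only [id_eq]
    have hx1 : b / 2 ≤ x := hx.1
    intro h
    rw [h] at hx1
    linarith
  exact A.trans B

theorem stmt_4 (α γ : ℝ) (hγ0 : 0 ≤ γ) (hγα : γ < α) (hα1 : α < 1)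
    (y : ℝ → ℝ) (hy : ContinuousOn y (Ioc 0 1))
    (hext : ∃ C : ℝ → ℝ, ContinuousOn C (Icc 0 1) ∧
      ∀ t ∈ Ioc (0:ℝ) 1, C t = t ^ γ * y t) :
    Tendsto (fun t : ℝ => (1 / Real.Gamma α) * ∫ s in (0:ℝ)..t, (t - s) ^ (α - 1) * y s)
      (nhdsWithin 0 (Ioi 0)) (nhds 0) := by
  obtain ⟨C, hC, hCy⟩ := hext
  obtain ⟨M, hM⟩ := isCompact_Icc.exists_bound_of_continuousOn hC
  have hM0 : 0 ≤ M := le_trans (norm_nonneg _) (hM 0 ⟨le_refl 0, zero_le_one⟩)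
  have hα0 : (0:ℝ) < α := lt_of_le_of_lt hγ0 hγα
  have hybound : ∀ s ∈ Ioc (0:ℝ) 1, |y s| ≤ M * s ^ (-γ) := by
    intro s hs
    have hs0 : (0:ℝ) < s := hs.1
    have h1 : s ^ γ * |y s| ≤ M := by
      have := hM s (Ioc_subset_Icc_self hs)
      rw [hCy s hs, Real.norm_eq_abs, abs_mul, abs_of_pos (rpow_pos_of_pos hs0 γ)] at this
      exact this
    have h2 : s ^ (-γ) * (s ^ γ * |y s|) ≤ s ^ (-γ) * M :=
      mul_le_mul_of_nonneg_left h1 (rpow_nonneg hs0.le _)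
    calc |y s| = s ^ (-γ) * (s ^ γ * |y s|) := by
            rw [← mul_assoc, ← Real.rpow_add hs0]; simp
      _ ≤ s ^ (-γ) * M := h2
      _ = M * s ^ (-γ) := mul_comm _ _
  set K := ∫ u in (0:ℝ)..1, (1 - u) ^ (α - 1) * u ^ (-γ) with hKdef
  have hK0 : 0 ≤ K := by
    apply intervalIntegral.integral_nonneg zero_le_one
    intro u hu
    exact mul_nonneg (rpow_nonneg (by linarith [hu.2]) _) (rpow_nonneg hu.1 _)
  have hval : ∀ t ∈ Ioc (0:ℝ) 1,
      (∫ s in (0:ℝ)..t, (t - s) ^ (α - 1) * s ^ (-γ)) = t ^ (α - γ) * K := by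
    intro t ht
    have ht0 : (0:ℝ) < t := ht.1
    have hsub := intervalIntegral.integral_comp_mul_right (a := (0:ℝ)) (b := 1)
      (fun s => (t - s) ^ (α - 1) * s ^ (-γ)) ht0.ne'
    have hcongr : (∫ u in (0:ℝ)..1, (t - u * t) ^ (α - 1) * (u * t) ^ (-γ))
        = (t ^ (α - 1) * t ^ (-γ)) * K := by
      rw [hKdef, ← intervalIntegral.integral_const_mul]
      apply intervalIntegral.integral_congr
      intro u hu
      rw [uIcc_of_le zero_le_one] at hu
      have hu0 : (0:ℝ) ≤ u := hu.1
      have hu1 : (0:ℝ) ≤ 1 - u := by linarith [hu.2]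
      have e1 : t - u * t = t * (1 - u) := by ring
      show (t - u * t) ^ (α - 1) * (u * t) ^ (-γ)
          = t ^ (α - 1) * t ^ (-γ) * ((1 - u) ^ (α - 1) * u ^ (-γ))
      rw [e1, Real.mul_rpow ht0.le hu1, Real.mul_rpow hu0 ht0.le]
      ring
    rw [zero_mul, one_mul] at hsub
    have : (∫ s in (0:ℝ)..t, (t - s) ^ (α - 1) * s ^ (-γ))
        = t * ((t ^ (α - 1) * t ^ (-γ)) * K) := by
      rw [← hcongr]
      rw [hsub, smul_eq_mul, ← mul_assoc, mul_inv_cancel₀ ht0.ne', one_mul]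
    rw [this]
    rw [show t * (t ^ (α - 1) * t ^ (-γ) * K) = (t * t ^ (α - 1) * t ^ (-γ)) * K by ring]
    congr 1
    have e3 : t * t ^ (α - 1) * t ^ (-γ) = t ^ (1 + (α - 1) + -γ) := by
      rw [Real.rpow_add ht0, Real.rpow_add ht0, Real.rpow_one]
    rw [e3]
    congr 1
    ring
  have hbig : ∀ t ∈ Ioc (0:ℝ) 1,
      |∫ s in (0:ℝ)..t, (t - s) ^ (α - 1) * y s| ≤ M * K * t ^ (α - γ) := by
    intro t ht
    have ht0 : (0:ℝ) < t := ht.1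
    have hft : IntervalIntegrable (fun s : ℝ => (t - s) ^ (α - 1) * s ^ (-γ))
        MeasureTheory.volume 0 t := aux_integrable (by linarith) (by linarith) ht0
    have hg : IntervalIntegrable (fun s : ℝ => M * ((t - s) ^ (α - 1) * s ^ (-γ)))
        MeasureTheory.volume 0 t := hft.const_mul M
    have hae : ∀ᵐ s ∂MeasureTheory.volume.restrict (Set.uIoc (0:ℝ) t),
        ‖(t - s) ^ (α - 1) * y s‖ ≤ M * ((t - s) ^ (α - 1) * s ^ (-γ)) := by
      rw [uIoc_of_le ht0.le]
      refine (MeasureTheory.ae_restrict_iff' measurableSet_Ioc).mpr ?_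
      filter_upwards with s hs
      have hs0 : (0:ℝ) < s := hs.1
      have hst : s ≤ t := hs.2
      have hts : (0:ℝ) ≤ (t - s) ^ (α - 1) := rpow_nonneg (by linarith) _
      have hsIoc : s ∈ Ioc (0:ℝ) 1 := ⟨hs0, le_trans hst ht.2⟩
      rw [Real.norm_eq_abs, abs_mul, abs_of_nonneg hts]
      calc (t - s) ^ (α - 1) * |y s| ≤ (t - s) ^ (α - 1) * (M * s ^ (-γ)) :=
            mul_le_mul_of_nonneg_left (hybound s hsIoc) hts
        _ = M * ((t - s) ^ (α - 1) * s ^ (-γ)) := by ring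
    have := intervalIntegral.norm_integral_le_abs_of_norm_le hae hg
    rw [Real.norm_eq_abs] at this
    refine le_trans this ?_
    rw [intervalIntegral.integral_const_mul, hval t ht]
    rw [abs_of_nonneg (by positivity)]
    exact le_of_eq (by ring)
  -- squeeze
  have habs : Tendsto (fun t : ℝ =>
      |(1 / Real.Gamma α) * ∫ s in (0:ℝ)..t, (t - s) ^ (α - 1) * y s|)
      (nhdsWithin 0 (Ioi 0)) (nhds 0) := by
    have hΓ : 0 < Real.Gamma α := Real.Gamma_pos_of_pos hα0
    have hglim : Tendsto (fun t : ℝ => (1 / Real.Gamma α) * (M * K) * t ^ (α - γ))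
        (nhdsWithin 0 (Ioi 0)) (nhds 0) := by
      have h1 : Tendsto (fun t : ℝ => t ^ (α - γ)) (nhdsWithin 0 (Ioi 0)) (nhds 0) := by
        have hc : ContinuousAt (fun t : ℝ => t ^ (α - γ)) 0 :=
          Real.continuousAt_rpow_const 0 (α - γ) (Or.inr (by linarith))
        have := hc.tendsto
        rw [Real.zero_rpow (sub_ne_zero.mpr hγα.ne')] at this
        exact this.mono_left nhdsWithin_le_nhds
      have := h1.const_mul ((1 / Real.Gamma α) * (M * K))
      simpa using this
    apply squeeze_zero' (Eventually.of_forall fun t => abs_nonneg _) _ hglim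
    filter_upwards [Ioo_mem_nhdsGT_of_mem (Set.mem_Ico.mpr ⟨le_refl 0, zero_lt_one⟩)] with t ht
    have htIoc : t ∈ Ioc (0:ℝ) 1 := ⟨ht.1, ht.2.le⟩
    rw [abs_mul, abs_of_nonneg (by positivity : (0:ℝ) ≤ 1 / Real.Gamma α)]
    calc (1 / Real.Gamma α) * |∫ s in (0:ℝ)..t, (t - s) ^ (α - 1) * y s|
        ≤ (1 / Real.Gamma α) * (M * K * t ^ (α - γ)) :=
          mul_le_mul_of_nonneg_left (hbig t htIoc) (by positivity)
      _ = (1 / Real.Gamma α) * (M * K) * t ^ (α - γ) := by ring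
  exact (tendsto_zero_iff_abs_tendsto_zero _).mpr habs
end

section
/- Let 0 < α ≤ 1, γ ∈ (0,1], λ ≥ 0 with μ := 1 - λ/Γ(γ+1) > 0, Λ ≥ 0, and let f : (0,1]×ℝ → ℝ satisfy |f(t,x) - f(t,y)| ≤ L_f ‖x - y‖ for a constant L_f (with ‖·‖ the weighted sup norm). If (λe/(Γ(γ)μ) + 1/Γ(α+1))·L_f < 1, then the operator Δ defined by Δy(t) = Λ t^{γ-1} + (λ t^{γ-1}/(Γ(γ)μ)) ∫_0^1 (Q(τ)/Γ(α)) f(τ,y(τ)) dτ + (1/Γ(α)) ∫_0^t (t-s)^{α-1} f(s,y(s)) ds is a contraction on the weighted space C_{1-γ}[0,1], i.e., ‖Δy₁ - Δy₂‖ ≤ (λe/(Γ(γ)μ) + 1/Γ(α+1))·L_f·‖y₁ - y₂‖. -/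
open Real Set

lemma gamma_lb {a : ℝ} (ha : 1 ≤ a) : Real.exp (-1) ≤ Real.Gamma a := by
  have ha0 : 0 < a := lt_of_lt_of_le one_pos ha
  rw [Real.Gamma_eq_integral ha0]
  have key : Real.exp (-1) = ∫ x in Set.Ioi (1:ℝ), Real.exp (-x) :=
    (integral_exp_neg_Ioi 1).symm
  rw [key]
  have hconv := Real.GammaIntegral_convergent ha0
  have h1 : ∫ x in Set.Ioi (1:ℝ), Real.exp (-x)
      ≤ ∫ x in Set.Ioi (1:ℝ), Real.exp (-x) * x ^ (a - 1) := by
    apply MeasureTheory.setIntegral_mono_on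
      (by simpa using exp_neg_integrableOn_Ioi 1 one_pos)
      (hconv.mono_set (by intro x hx; exact lt_trans one_pos (Set.mem_Ioi.mp hx))) measurableSet_Ioi
    intro x hx
    have hx1 : (1:ℝ) ≤ x := le_of_lt hx
    have h2 : (1:ℝ) ≤ x ^ (a - 1) := by
      calc (1:ℝ) = 1 ^ (a-1) := (Real.one_rpow _).symm
      _ ≤ x ^ (a - 1) := Real.rpow_le_rpow (by norm_num) hx1 (by linarith)
    nth_rewrite 1 [← mul_one (Real.exp (-x))]
    exact mul_le_mul_of_nonneg_left h2 (le_of_lt (Real.exp_pos _))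
  refine h1.trans ?_
  apply MeasureTheory.setIntegral_mono_set hconv
  · filter_upwards [MeasureTheory.ae_restrict_mem measurableSet_Ioi] with x hx
    have hx0 : (0:ℝ) < x := hx
    positivity
  · exact Filter.Eventually.of_forall (by intro x hx; exact lt_trans one_pos hx)

lemma rint {r : ℝ} (hr : -1 < r) (a b : ℝ) :
    ∫ s in a..b, (s - a) ^ r = (b - a) ^ (r + 1) / (r + 1) := by
  rw [intervalIntegral.integral_comp_sub_right (fun u => u ^ r) a, sub_self,
    integral_rpow (Or.inl hr), Real.zero_rpow (by linarith), sub_zero]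

lemma rint' {r : ℝ} (hr : -1 < r) (t : ℝ) :
    ∫ s in (0:ℝ)..t, (t - s) ^ r = t ^ (r + 1) / (r + 1) := by
  rw [intervalIntegral.integral_comp_sub_left (fun u => u ^ r) t, sub_zero, sub_self,
    integral_rpow (Or.inl hr), Real.zero_rpow (by linarith), sub_zero]

lemma rintble {r : ℝ} (hr : -1 < r) (t : ℝ) :
    IntervalIntegrable (fun s => (t - s) ^ r) MeasureTheory.volume 0 t := by
  have := (intervalIntegral.intervalIntegrable_rpow' (a := t) (b := 0) hr).comp_sub_left t
  simpa using this

lemma contg {α : ℝ} (hα : 0 < α) : Continuous (fun τ : ℝ => (1 - τ) ^ α) := by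
  have h : Continuous (fun x : ℝ => x ^ α) :=
    continuous_iff_continuousAt.mpr fun x => Real.continuousAt_rpow_const x α (Or.inr hα.le)
  exact h.comp (continuous_const.sub continuous_id)

theorem stmt_14 (α γ lam μ Λ L N : ℝ) (hα : 0 < α) (hα1 : α ≤ 1)
    (hγ : 0 < γ) (hγ1 : γ ≤ 1) (hlam : 0 ≤ lam)
    (hμ : μ = 1 - lam / Real.Gamma (γ + 1)) (hμpos : 0 < μ) (hΛ : 0 ≤ Λ)
    (hL : 0 ≤ L)
    (hsmall : (lam * Real.exp 1 / (Real.Gamma γ * μ) + 1 / Real.Gamma (α + 1)) * L < 1)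
    (f : ℝ → ℝ → ℝ) (y₁ y₂ : ℝ → ℝ)
    (hN : N = sSup ((fun t : ℝ => |t ^ (1 - γ) * (y₁ t - y₂ t)|) '' Icc 0 1))
    (hLip : ∀ t ∈ Ioc (0:ℝ) 1, |f t (y₁ t) - f t (y₂ t)| ≤ L * N)
    (hint₁ : IntervalIntegrable (fun s => f s (y₁ s)) MeasureTheory.volume 0 1)
    (hint₂ : IntervalIntegrable (fun s => f s (y₂ s)) MeasureTheory.volume 0 1) :
    ∀ t ∈ Ioc (0:ℝ) 1,
      |t ^ (1 - γ) *
        ((Λ * t ^ (γ - 1)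
            + (lam * t ^ (γ - 1) / (Real.Gamma γ * μ)) *
                (∫ τ in (0:ℝ)..1,
                  ((∫ s in τ..1, (s - τ) ^ (α - 1)) / Real.Gamma α) * f τ (y₁ τ))
            + (1 / Real.Gamma α) * ∫ s in (0:ℝ)..t, (t - s) ^ (α - 1) * f s (y₁ s))
          - (Λ * t ^ (γ - 1)
            + (lam * t ^ (γ - 1) / (Real.Gamma γ * μ)) *
                (∫ τ in (0:ℝ)..1,
                  ((∫ s in τ..1, (s - τ) ^ (α - 1)) / Real.Gamma α) * f τ (y₂ τ))
            + (1 / Real.Gamma α) * ∫ s in (0:ℝ)..t, (t - s) ^ (α - 1) * f s (y₂ s)))|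
        ≤ (lam * Real.exp 1 / (Real.Gamma γ * μ) + 1 / Real.Gamma (α + 1)) * L * N := by
  intro t ht
  obtain ⟨ht0, ht1⟩ := ht
  have hr : -1 < α - 1 := by linarith
  have hGα : 0 < Real.Gamma α := Real.Gamma_pos_of_pos hα
  have hGγ : 0 < Real.Gamma γ := Real.Gamma_pos_of_pos hγ
  have hGα1 : 0 < Real.Gamma (α + 1) := Real.Gamma_pos_of_pos (by linarith)
  have hGrel : Real.Gamma (α + 1) = α * Real.Gamma α := Real.Gamma_add_one hα.ne'
  have hN0 : 0 ≤ N := by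
    rw [hN]
    apply Real.sSup_nonneg
    rintro x ⟨s, _, rfl⟩
    exact abs_nonneg _
  have hLN : 0 ≤ L * N := mul_nonneg hL hN0
  have hge : Real.exp (-1) ≤ Real.Gamma (α + 1) := gamma_lb (by linarith)
  have hGe : 1 / Real.Gamma (α + 1) ≤ Real.exp 1 := by
    rw [div_le_iff₀ hGα1]
    have h2 : Real.exp 1 * Real.exp (-1) = 1 := by rw [← Real.exp_add]; norm_num
    nlinarith [mul_le_mul_of_nonneg_left hge (Real.exp_pos 1).le]
  -- rewrite the Q integrand
  have hQ : ∀ τ : ℝ, (∫ s in τ..1, (s - τ) ^ (α - 1)) = (1 - τ) ^ α / α := by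
    intro τ
    have e : α - 1 + 1 = α := by ring
    rw [rint hr τ 1, e]
  have hQfun : ∀ (y : ℝ → ℝ),
      (fun τ => ((∫ s in τ..1, (s - τ) ^ (α - 1)) / Real.Gamma α) * f τ (y τ))
        = fun τ => ((1 - τ) ^ α / α / Real.Gamma α) * f τ (y τ) := by
    intro y; funext τ; rw [hQ]
  have hgc : Continuous (fun τ : ℝ => (1 - τ) ^ α / α / Real.Gamma α) :=
    ((contg hα).div_const α).div_const _
  have hA₁ : IntervalIntegrable
      (fun τ => ((∫ s in τ..1, (s - τ) ^ (α - 1)) / Real.Gamma α) * f τ (y₁ τ))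
      MeasureTheory.volume 0 1 := by
    rw [hQfun]; exact hint₁.continuousOn_mul hgc.continuousOn
  have hA₂ : IntervalIntegrable
      (fun τ => ((∫ s in τ..1, (s - τ) ^ (α - 1)) / Real.Gamma α) * f τ (y₂ τ))
      MeasureTheory.volume 0 1 := by
    rw [hQfun]; exact hint₂.continuousOn_mul hgc.continuousOn
  set A₁ := ∫ τ in (0:ℝ)..1, ((∫ s in τ..1, (s - τ) ^ (α - 1)) / Real.Gamma α) * f τ (y₁ τ)
    with hA₁def
  set A₂ := ∫ τ in (0:ℝ)..1, ((∫ s in τ..1, (s - τ) ^ (α - 1)) / Real.Gamma α) * f τ (y₂ τ)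
    with hA₂def
  set C₁ := ∫ s in (0:ℝ)..t, (t - s) ^ (α - 1) * f s (y₁ s) with hC₁def
  set C₂ := ∫ s in (0:ℝ)..t, (t - s) ^ (α - 1) * f s (y₂ s) with hC₂def
  -- bound |A₁ - A₂|
  have hB1 : |A₁ - A₂| ≤ Real.exp 1 * (L * N) := by
    rw [hA₁def, hA₂def, ← intervalIntegral.integral_sub hA₁ hA₂]
    have hptw : ∀ τ ∈ Set.uIoc (0:ℝ) 1,
        ‖((∫ s in τ..1, (s - τ) ^ (α - 1)) / Real.Gamma α) * f τ (y₁ τ)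
          - ((∫ s in τ..1, (s - τ) ^ (α - 1)) / Real.Gamma α) * f τ (y₂ τ)‖
        ≤ Real.exp 1 * (L * N) := by
      intro τ hτ
      rw [Set.uIoc_of_le (by norm_num : (0:ℝ) ≤ 1)] at hτ
      rw [Real.norm_eq_abs, ← mul_sub, abs_mul, hQ]
      have h1τ : 0 ≤ 1 - τ := by linarith [hτ.2]
      have hq1 : (1 - τ) ^ α ≤ 1 := Real.rpow_le_one h1τ (by linarith [hτ.1]) hα.le
      have hq0 : 0 ≤ (1 - τ) ^ α := Real.rpow_nonneg h1τ _
      have habs : |(1 - τ) ^ α / α / Real.Gamma α| ≤ Real.exp 1 := by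
        rw [abs_of_nonneg (by positivity)]
        calc (1 - τ) ^ α / α / Real.Gamma α ≤ 1 / α / Real.Gamma α := by gcongr
          _ = 1 / Real.Gamma (α + 1) := by rw [hGrel]; field_simp
          _ ≤ Real.exp 1 := hGe
      apply mul_le_mul habs (hLip τ hτ) (abs_nonneg _) (Real.exp_pos 1).le
    have := intervalIntegral.norm_integral_le_of_norm_le_const hptw
    simpa using this
  -- bound the second term
  have tpow_le : t ^ (1 - γ) * (t ^ α / α) ≤ 1 / α := by
    have h1 : t ^ (1 - γ) * t ^ α = t ^ (1 - γ + α) := (Real.rpow_add ht0 _ _).symm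
    have h2 : t ^ (1 - γ + α) ≤ 1 := Real.rpow_le_one ht0.le ht1 (by linarith)
    calc t ^ (1 - γ) * (t ^ α / α) = t ^ (1 - γ + α) / α := by rw [← h1]; ring
      _ ≤ 1 / α := by gcongr
  have htpow0 : 0 ≤ t ^ (1 - γ) := Real.rpow_nonneg ht0.le _
  -- integrability of the difference kernel
  have hws : ∀ s ∈ Ioc (0:ℝ) t, |(t - s) ^ (α - 1) * (f s (y₁ s) - f s (y₂ s))|
      ≤ (t - s) ^ (α - 1) * (L * N) := by
    intro s hs
    have hts : 0 ≤ t - s := by linarith [hs.2]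
    rw [abs_mul, abs_of_nonneg (Real.rpow_nonneg hts _)]
    exact mul_le_mul_of_nonneg_left (hLip s ⟨hs.1, le_trans hs.2 ht1⟩)
      (Real.rpow_nonneg hts _)
  have hwint : IntervalIntegrable
      (fun s => (t - s) ^ (α - 1) * (f s (y₁ s) - f s (y₂ s)))
      MeasureTheory.volume 0 t := by
    rw [intervalIntegrable_iff_integrableOn_Ioc_of_le ht0.le]
    have hg : MeasureTheory.IntegrableOn (fun s => (t - s) ^ (α - 1) * (L * N)) (Ioc 0 t) := by
      have := (rintble hr t).mul_const (L * N)
      rwa [intervalIntegrable_iff_integrableOn_Ioc_of_le ht0.le] at this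
    apply hg.mono'
    · have hm : Measurable (fun s : ℝ => (t - s) ^ (α - 1)) := by fun_prop
      have h₁ : MeasureTheory.AEStronglyMeasurable (fun s => f s (y₁ s))
          (MeasureTheory.volume.restrict (Ioc 0 t)) :=
        (hint₁.1.mono_set (Ioc_subset_Ioc le_rfl ht1)).aestronglyMeasurable
      have h₂ : MeasureTheory.AEStronglyMeasurable (fun s => f s (y₂ s))
          (MeasureTheory.volume.restrict (Ioc 0 t)) :=
        (hint₂.1.mono_set (Ioc_subset_Ioc le_rfl ht1)).aestronglyMeasurable
      exact (hm.aestronglyMeasurable.mul (h₁.sub h₂))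
    · filter_upwards [MeasureTheory.ae_restrict_mem measurableSet_Ioc] with s hs
      simp only [Real.norm_eq_abs]
      exact hws s hs
  have hB2 : |t ^ (1 - γ) * ((1 / Real.Gamma α) * (C₁ - C₂))|
      ≤ 1 / Real.Gamma (α + 1) * (L * N) := by
    by_cases hC : IntervalIntegrable (fun s => (t - s) ^ (α - 1) * f s (y₁ s))
        MeasureTheory.volume 0 t
    · have hC2 : IntervalIntegrable (fun s => (t - s) ^ (α - 1) * f s (y₂ s))
          MeasureTheory.volume 0 t := by
        have := hC.sub hwint
        convert this using 1
        funext s; ring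
      have hdiff : C₁ - C₂
          = ∫ s in (0:ℝ)..t, (t - s) ^ (α - 1) * (f s (y₁ s) - f s (y₂ s)) := by
        rw [hC₁def, hC₂def, ← intervalIntegral.integral_sub hC hC2]
        congr 1; funext s; ring
      have hIbound : |∫ s in (0:ℝ)..t, (t - s) ^ (α - 1) * (f s (y₁ s) - f s (y₂ s))|
          ≤ t ^ α / α * (L * N) := by
        have hae : ∀ᵐ s ∂(MeasureTheory.volume.restrict (Set.uIoc (0:ℝ) t)),
            ‖(t - s) ^ (α - 1) * (f s (y₁ s) - f s (y₂ s))‖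
            ≤ (t - s) ^ (α - 1) * (L * N) := by
          filter_upwards [MeasureTheory.ae_restrict_mem measurableSet_uIoc] with s hs
          rw [Set.uIoc_of_le ht0.le] at hs
          simp only [Real.norm_eq_abs]
          exact hws s hs
        have hb := intervalIntegral.norm_integral_le_abs_of_norm_le hae
          ((rintble hr t).mul_const (L * N))
        rw [Real.norm_eq_abs] at hb
        refine hb.trans ?_
        rw [intervalIntegral.integral_mul_const, rint' hr t]
        have e : α - 1 + 1 = α := by ring
        rw [e, abs_of_nonneg (by positivity : (0:ℝ) ≤ t ^ α / α * (L * N))]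
      rw [hdiff, abs_mul, abs_mul, abs_of_nonneg htpow0,
        abs_of_nonneg (by positivity : (0:ℝ) ≤ 1 / Real.Gamma α)]
      calc t ^ (1 - γ) * (1 / Real.Gamma α *
            |∫ s in (0:ℝ)..t, (t - s) ^ (α - 1) * (f s (y₁ s) - f s (y₂ s))|)
          ≤ t ^ (1 - γ) * (1 / Real.Gamma α * (t ^ α / α * (L * N))) := by gcongr
        _ = t ^ (1 - γ) * (t ^ α / α) * (1 / Real.Gamma α) * (L * N) := by ring
        _ ≤ 1 / α * (1 / Real.Gamma α) * (L * N) := by gcongr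
        _ = 1 / Real.Gamma (α + 1) * (L * N) := by rw [hGrel]; field_simp
    · have hC2 : ¬ IntervalIntegrable (fun s => (t - s) ^ (α - 1) * f s (y₂ s))
          MeasureTheory.volume 0 t := by
        intro h
        apply hC
        have := h.add hwint
        convert this using 1
        funext s; ring
      rw [hC₁def, hC₂def, intervalIntegral.integral_undef hC,
        intervalIntegral.integral_undef hC2]
      simp only [sub_self, mul_zero, zero_mul, abs_zero]
      positivity
  -- put everything together
  have tpow : t ^ (1 - γ) * t ^ (γ - 1) = 1 := by
    rw [← Real.rpow_add ht0]
    norm_num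
  have hexpr : t ^ (1 - γ) *
      ((Λ * t ^ (γ - 1) + (lam * t ^ (γ - 1) / (Real.Gamma γ * μ)) * A₁
          + (1 / Real.Gamma α) * C₁)
        - (Λ * t ^ (γ - 1) + (lam * t ^ (γ - 1) / (Real.Gamma γ * μ)) * A₂
          + (1 / Real.Gamma α) * C₂))
      = (t ^ (1 - γ) * t ^ (γ - 1)) * (lam / (Real.Gamma γ * μ)) * (A₁ - A₂)
        + t ^ (1 - γ) * ((1 / Real.Gamma α) * (C₁ - C₂)) := by ring
  rw [hexpr, tpow, one_mul]
  have hfinal : |lam / (Real.Gamma γ * μ) * (A₁ - A₂)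
      + t ^ (1 - γ) * (1 / Real.Gamma α * (C₁ - C₂))|
      ≤ lam / (Real.Gamma γ * μ) * (Real.exp 1 * (L * N))
        + 1 / Real.Gamma (α + 1) * (L * N) := by
    refine (abs_add_le _ _).trans (add_le_add ?_ hB2)
    rw [abs_mul, abs_of_nonneg (by positivity : (0:ℝ) ≤ lam / (Real.Gamma γ * μ))]
    exact mul_le_mul_of_nonneg_left hB1 (by positivity)
  refine hfinal.trans (le_of_eq ?_)
  ring
end
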